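/- Let s ∈ (0,1), s₁, s₂ ∈ (s,1) and p, p₁, p₂ ≥ 1 with 1/p₁ + 1/p₂ = 1/p. Then there exists a constant c > 0 such that ‖u₁ u₂‖_{W^{s,p}} ≤ c ‖u₁‖_{W^{s₁,p₁}} ‖u₂‖_{W^{s₂,p₂}} for all u₁ ∈ W^{s₁,p₁} and u₂ ∈ W^{s₂,p₂} on the two-dimensional torus. -/

import Mathlib

open scoped ENNReal Real
open MeasureTheory

/-- The fundamental domain `[-π,π]²` of the torus `𝕋²`. -/
noncomputable def torusBox : Set (ℝ × ℝ) := Set.Icc (-π) π ×ˢ Set.Icc (-π) π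

/-- The `p`-th power of the fractional Sobolev (Sobolev–Slobodeckij) norm
`‖u‖^p_{W^{s,p}} = ∫|u|^p dx + ∬ |u(x)-u(y)|^p / |x-y|^{2+sp} dx dy`
of a periodic function on the torus `𝕋²`. -/
noncomputable def WNormP (s p : ℝ) (u : ℝ × ℝ → ℝ) : ℝ≥0∞ :=
  (∫⁻ x in torusBox, ENNReal.ofReal (|u x| ^ p)) +
    ∫⁻ z in torusBox ×ˢ torusBox,
      ENNReal.ofReal (|u z.1 - u z.2| ^ p / ‖z.1 - z.2‖ ^ (2 + s * p))

section Helpers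

lemma oneD_kernel_finite {r : ℝ} (hr : r < 1) :
    ∫⁻ a in Set.Icc (-(2*π)) (2*π), ENNReal.ofReal (|a| ^ (-r)) < ∞ := by
  have hR : (0:ℝ) < 2*π := by positivity
  have h1 : IntegrableOn (fun a : ℝ => |a| ^ (-r)) (Set.Ioc 0 (2*π)) := by
    have h := (intervalIntegral.intervalIntegrable_rpow' (a := 0) (b := 2*π)
      (r := -r) (by linarith)).1
    exact h.congr_fun (fun a ha => by rw [abs_of_pos ha.1]) measurableSet_Ioc
  have h2 : IntegrableOn (fun a : ℝ => |a| ^ (-r)) (Set.Ioc (-(2*π)) 0) := by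
    have h := (intervalIntegral.intervalIntegrable_rpow' (a := 0) (b := 2*π)
      (r := -r) (by linarith))
    have h' := ((IntervalIntegrable.iff_comp_neg (a := 0) (b := 2*π) (f := fun a : ℝ => a ^ (-r))).mp h)
    rw [neg_zero] at h'
    exact h'.2.congr_fun (fun a ha => by rw [abs_of_nonpos ha.2]) measurableSet_Ioc
  have h3 : IntegrableOn (fun a : ℝ => |a| ^ (-r)) (Set.Icc (-(2*π)) (2*π)) := by
    rw [integrableOn_Icc_iff_integrableOn_Ioc]
    rw [← Set.Ioc_union_Ioc_eq_Ioc (by linarith : -(2*π) ≤ 0) hR.le]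
    exact h2.union h1
  exact h3.lintegral_lt_top

lemma torusBox_volume_ne_top : volume torusBox ≠ ∞ :=
  ((isCompact_Icc.prod isCompact_Icc).measure_lt_top).ne

lemma norm_sub_le_of_mem_torusBox {x y : ℝ × ℝ} (hx : x ∈ torusBox) (hy : y ∈ torusBox) :
    ‖x - y‖ ≤ 2*π := by
  simp only [torusBox, Set.mem_prod, Set.mem_Icc] at hx hy
  rw [Prod.norm_def]
  have h1 : |x.1 - y.1| ≤ 2*π := by
    rw [abs_le]; constructor <;> [nlinarith [hx.1.1, hy.1.2]; nlinarith [hx.1.2, hy.1.1]]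
  have h2 : |x.2 - y.2| ≤ 2*π := by
    rw [abs_le]; constructor <;> [nlinarith [hx.2.1, hy.2.2]; nlinarith [hx.2.2, hy.2.1]]
  simp only [Prod.fst_sub, Prod.snd_sub, Real.norm_eq_abs]
  exact max_le h1 h2

lemma kernel_bound {t : ℝ} (ht : t < 2) :
    ∃ C : ℝ≥0∞, C ≠ ∞ ∧ ∀ x ∈ torusBox,
      (∫⁻ y in torusBox, ENNReal.ofReal (‖x - y‖ ^ (-t))) ≤ C := by
  rcases le_or_gt t 0 with ht0 | ht0
  · refine ⟨ENNReal.ofReal ((2*π) ^ (-t)) * volume torusBox,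
      ENNReal.mul_ne_top ENNReal.ofReal_ne_top torusBox_volume_ne_top, fun x hx => ?_⟩
    calc ∫⁻ y in torusBox, ENNReal.ofReal (‖x - y‖ ^ (-t))
        ≤ ∫⁻ _ in torusBox, ENNReal.ofReal ((2*π) ^ (-t)) := by
          refine setLIntegral_mono measurable_const (fun y hy => ?_)
          exact ENNReal.ofReal_le_ofReal (Real.rpow_le_rpow (norm_nonneg _)
            (norm_sub_le_of_mem_torusBox hx hy) (by linarith))
      _ = ENNReal.ofReal ((2*π) ^ (-t)) * volume torusBox := by
          rw [setLIntegral_const]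
  · set I := ∫⁻ a in Set.Icc (-(2*π)) (2*π), ENNReal.ofReal (|a| ^ (-(t/2))) with hI_def
    have hI : I ≠ ∞ := (oneD_kernel_finite (by linarith)).ne
    refine ⟨I * I, ENNReal.mul_ne_top hI hI, fun x hx => ?_⟩
    set S : Set (ℝ × ℝ) := Set.Icc (-(2*π)) (2*π) ×ˢ Set.Icc (-(2*π)) (2*π) with hS_def
    have hsub : torusBox ⊆ (fun y => x - y) ⁻¹' S := by
      intro y hy
      simp only [Set.mem_preimage, hS_def, Set.mem_prod, Set.mem_Icc]
      have h := norm_sub_le_of_mem_torusBox hx hy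
      rw [Prod.norm_def] at h
      simp only [Prod.fst_sub, Prod.snd_sub, Real.norm_eq_abs] at h
      have h1 := (abs_le.mp ((le_max_left _ _).trans h))
      have h2 := (abs_le.mp ((le_max_right _ _).trans h))
      exact ⟨⟨h1.1, h1.2⟩, ⟨h2.1, h2.2⟩⟩
    have hmp : MeasurePreserving (fun y : ℝ × ℝ => x - y) volume volume :=
      Measure.measurePreserving_sub_left volume x
    have hemb : MeasurableEmbedding (fun y : ℝ × ℝ => x - y) :=
      (MeasurableEquiv.subLeft x).measurableEmbedding
    calc ∫⁻ y in torusBox, ENNReal.ofReal (‖x - y‖ ^ (-t))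
        ≤ ∫⁻ y in (fun y => x - y) ⁻¹' S, ENNReal.ofReal (‖x - y‖ ^ (-t)) :=
          lintegral_mono_set hsub
      _ = ∫⁻ z in S, ENNReal.ofReal (‖z‖ ^ (-t)) :=
          hmp.setLIntegral_comp_preimage_emb hemb (fun z => ENNReal.ofReal (‖z‖ ^ (-t))) S
      _ ≤ ∫⁻ z in S, ENNReal.ofReal (|z.1| ^ (-(t/2))) * ENNReal.ofReal (|z.2| ^ (-(t/2))) := by
          refine lintegral_mono_ae (ae_restrict_of_ae ?_)
          have hnull1 : volume {z : ℝ × ℝ | z.1 = 0} = 0 := by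
            have : {z : ℝ × ℝ | z.1 = 0} = ({0} : Set ℝ) ×ˢ (Set.univ : Set ℝ) := by
              ext z; simp [Set.mem_prod, Prod.ext_iff, eq_comm]
            rw [this, Measure.volume_eq_prod ℝ ℝ, Measure.prod_prod]
            simp
          have hnull2 : volume {z : ℝ × ℝ | z.2 = 0} = 0 := by
            have : {z : ℝ × ℝ | z.2 = 0} = (Set.univ : Set ℝ) ×ˢ ({0} : Set ℝ) := by
              ext z; simp [Set.mem_prod, Prod.ext_iff, eq_comm]
            rw [this, Measure.volume_eq_prod ℝ ℝ, Measure.prod_prod]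
            simp
          filter_upwards [compl_mem_ae_iff.mpr hnull1, compl_mem_ae_iff.mpr hnull2] with z hz1 hz2
          simp only [Set.mem_compl_iff, Set.mem_setOf_eq] at hz1 hz2
          have ha : 0 < |z.1| := abs_pos.mpr hz1
          have hb : 0 < |z.2| := abs_pos.mpr hz2
          rw [← ENNReal.ofReal_mul (Real.rpow_nonneg (abs_nonneg _) _)]
          refine ENNReal.ofReal_le_ofReal ?_
          have key : ‖z‖ ^ (-t) ≤ (|z.1| * |z.2|) ^ (-(t/2)) := by
            have hsq : (|z.1| * |z.2|) ^ ((1:ℝ)/2) ≤ ‖z‖ := by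
              have hmax : |z.1| * |z.2| ≤ ‖z‖ ^ (2:ℕ) := by
                rw [Prod.norm_def]
                simp only [Real.norm_eq_abs]
                calc |z.1| * |z.2| ≤ max |z.1| |z.2| * max |z.1| |z.2| :=
                    mul_le_mul (le_max_left _ _) (le_max_right _ _) (abs_nonneg _)
                      (le_trans (abs_nonneg _) (le_max_left _ _))
                  _ = max |z.1| |z.2| ^ (2:ℕ) := by ring
              calc (|z.1| * |z.2|) ^ ((1:ℝ)/2) ≤ (‖z‖ ^ (2:ℕ)) ^ ((1:ℝ)/2) := by
                    exact Real.rpow_le_rpow (by positivity) hmax (by norm_num)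
                _ = ‖z‖ := by
                    rw [← Real.rpow_natCast ‖z‖ 2, ← Real.rpow_mul (norm_nonneg _)]
                    norm_num
            calc ‖z‖ ^ (-t) ≤ ((|z.1| * |z.2|) ^ ((1:ℝ)/2)) ^ (-t) :=
                Real.rpow_le_rpow_of_nonpos (by positivity) hsq (by linarith)
              _ = (|z.1| * |z.2|) ^ (-(t/2)) := by
                rw [← Real.rpow_mul (by positivity)]; ring_nf
          calc ‖z‖ ^ (-t) ≤ (|z.1| * |z.2|) ^ (-(t/2)) := key
            _ = |z.1| ^ (-(t/2)) * |z.2| ^ (-(t/2)) :=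
                Real.mul_rpow (abs_nonneg _) (abs_nonneg _)
      _ = I * I := by
          rw [hS_def, Measure.volume_eq_prod ℝ ℝ, ← Measure.prod_restrict]
          exact lintegral_prod_mul (f := fun a : ℝ => ENNReal.ofReal (|a| ^ (-(t/2))))
            (g := fun a : ℝ => ENNReal.ofReal (|a| ^ (-(t/2))))
            (Measurable.aemeasurable (by fun_prop))
            (Measurable.aemeasurable (by fun_prop))

lemma holder_step {X : Type*} [MeasurableSpace X] {μ : Measure X} {p pa pb : ℝ}
    (hp0 : 0 < p) (hpa : 0 < pa) (hpb : 0 < pb)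
    (hconj : Real.HolderConjugate (pa/p) (pb/p))
    (f g : X → ℝ) (hf : Measurable f) (hg : Measurable g)
    (hf0 : ∀ x, 0 ≤ f x) (hg0 : ∀ x, 0 ≤ g x) :
    ∫⁻ x, ENNReal.ofReal (f x ^ p * g x ^ p) ∂μ ≤
      (∫⁻ x, ENNReal.ofReal (f x ^ pa) ∂μ) ^ (p/pa) *
        (∫⁻ x, ENNReal.ofReal (g x ^ pb) ∂μ) ^ (p/pb) := by
  have hF : Measurable fun x => ENNReal.ofReal (f x ^ p) := by fun_prop
  have hG : Measurable fun x => ENNReal.ofReal (g x ^ p) := by fun_prop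
  have key := ENNReal.lintegral_mul_le_Lp_mul_Lq μ hconj hF.aemeasurable hG.aemeasurable
  have h1 : ∀ x, ENNReal.ofReal (f x ^ p * g x ^ p)
      = ((fun x => ENNReal.ofReal (f x ^ p)) * fun x => ENNReal.ofReal (g x ^ p)) x := by
    intro x
    simp [ENNReal.ofReal_mul (Real.rpow_nonneg (hf0 x) p)]
  calc ∫⁻ x, ENNReal.ofReal (f x ^ p * g x ^ p) ∂μ
      = ∫⁻ x, ((fun x => ENNReal.ofReal (f x ^ p)) * fun x => ENNReal.ofReal (g x ^ p)) x ∂μ := by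
        simp_rw [h1]
    _ ≤ (∫⁻ x, ENNReal.ofReal (f x ^ p) ^ (pa/p) ∂μ) ^ (1/(pa/p)) *
        (∫⁻ x, ENNReal.ofReal (g x ^ p) ^ (pb/p) ∂μ) ^ (1/(pb/p)) := key
    _ = (∫⁻ x, ENNReal.ofReal (f x ^ pa) ∂μ) ^ (p/pa) *
        (∫⁻ x, ENNReal.ofReal (g x ^ pb) ∂μ) ^ (p/pb) := by
        have hpt : ∀ (a q qa : ℝ), 0 ≤ a → 0 < q → 0 < qa →
            ENNReal.ofReal (a ^ q) ^ (qa/q) = ENNReal.ofReal (a ^ qa) := by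
          intro a q qa ha hq hqa
          rw [ENNReal.ofReal_rpow_of_nonneg (Real.rpow_nonneg ha q) (by positivity),
            ← Real.rpow_mul ha]
          congr 1
          field_simp
        rw [one_div_div, one_div_div]
        congr 1
        · congr 1
          exact lintegral_congr fun x => hpt _ _ _ (hf0 x) hp0 hpa
        · congr 1
          exact lintegral_congr fun x => hpt _ _ _ (hg0 x) hp0 hpb

lemma fubini_bound (v : ℝ × ℝ → ℝ) (hv : Measurable v) {t q : ℝ} {C : ℝ≥0∞}
    (hC : ∀ x ∈ torusBox, (∫⁻ y in torusBox, ENNReal.ofReal (‖x - y‖ ^ (-t))) ≤ C) :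
    ∫⁻ z in torusBox ×ˢ torusBox, ENNReal.ofReal (|v z.1| ^ q * ‖z.1 - z.2‖ ^ (-t))
      ≤ C * ∫⁻ x in torusBox, ENNReal.ofReal (|v x| ^ q) := by
  have hsplit : ∀ z : (ℝ × ℝ) × (ℝ × ℝ), ENNReal.ofReal (|v z.1| ^ q * ‖z.1 - z.2‖ ^ (-t))
      = ENNReal.ofReal (|v z.1| ^ q) * ENNReal.ofReal (‖z.1 - z.2‖ ^ (-t)) :=
    fun z => ENNReal.ofReal_mul (Real.rpow_nonneg (abs_nonneg _) _)
  simp_rw [hsplit]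
  rw [Measure.volume_eq_prod, ← Measure.prod_restrict,
    lintegral_prod _ (Measurable.aemeasurable (by fun_prop))]
  calc ∫⁻ x in torusBox, ∫⁻ y in torusBox,
        ENNReal.ofReal (|v x| ^ q) * ENNReal.ofReal (‖x - y‖ ^ (-t))
      ≤ ∫⁻ x in torusBox, ENNReal.ofReal (|v x| ^ q) * C := by
        refine setLIntegral_mono (by fun_prop) fun x hx => ?_
        rw [lintegral_const_mul _ (by fun_prop)]
        exact mul_le_mul_right (hC x hx) _
    _ = C * ∫⁻ x in torusBox, ENNReal.ofReal (|v x| ^ q) := by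
        simp_rw [mul_comm]
        exact lintegral_const_mul _ (by fun_prop)

lemma lintegral_swap_box (f : (ℝ × ℝ) × (ℝ × ℝ) → ℝ≥0∞) :
    ∫⁻ z in torusBox ×ˢ torusBox, f (z.2, z.1) = ∫⁻ z in torusBox ×ˢ torusBox, f z := by
  have hmp : MeasurePreserving (Prod.swap : (ℝ × ℝ) × (ℝ × ℝ) → (ℝ × ℝ) × (ℝ × ℝ))
      volume volume := by
    rw [Measure.volume_eq_prod]
    exact Measure.measurePreserving_swap
  have hemb : MeasurableEmbedding (Prod.swap : (ℝ × ℝ) × (ℝ × ℝ) → (ℝ × ℝ) × (ℝ × ℝ)) :=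
    MeasurableEquiv.prodComm.measurableEmbedding
  have hpre : (Prod.swap : (ℝ × ℝ) × (ℝ × ℝ) → (ℝ × ℝ) × (ℝ × ℝ)) ⁻¹' (torusBox ×ˢ torusBox)
      = torusBox ×ˢ torusBox := by
    ext z; simp [Set.mem_prod, and_comm]
  have := hmp.setLIntegral_comp_preimage_emb hemb f (torusBox ×ˢ torusBox)
  rw [hpre] at this
  exact this

lemma add_rpow_le_two_rpow {p a b : ℝ} (hp : 1 ≤ p) (ha : 0 ≤ a) (hb : 0 ≤ b) :
    (a + b) ^ p ≤ 2 ^ p * (a ^ p + b ^ p) := by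
  have h1 : a + b ≤ 2 * max a b := by
    rcases le_total a b with h | h
    · rw [max_eq_right h]; linarith
    · rw [max_eq_left h]; linarith
  calc (a + b) ^ p ≤ (2 * max a b) ^ p :=
      Real.rpow_le_rpow (by positivity) h1 (by linarith)
    _ = 2 ^ p * (max a b) ^ p := Real.mul_rpow (by norm_num) (le_trans ha (le_max_left _ _))
    _ ≤ 2 ^ p * (a ^ p + b ^ p) := by
      have : (max a b) ^ p ≤ a ^ p + b ^ p := by
        rcases max_cases a b with ⟨h, _⟩ | ⟨h, _⟩ <;> rw [h]
        · exact le_add_of_nonneg_right (Real.rpow_nonneg hb p)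
        · exact le_add_of_nonneg_left (Real.rpow_nonneg ha p)
      exact mul_le_mul_of_nonneg_left this (by positivity)

lemma pointwise_key {p e₁ f₁ e₂ f₂ E : ℝ} (hp : 1 ≤ p) (hE : E ≠ 0)
    (hE₁ : (e₁ + f₁) * p = E) (hE₂ : (e₂ + f₂) * p = E)
    (a₁ b₁ a₂ b₂ K : ℝ) (hK : 0 ≤ K) :
    ENNReal.ofReal (|a₁ * a₂ - b₁ * b₂| ^ p / K ^ E) ≤
      ENNReal.ofReal (2 ^ p) *
        (ENNReal.ofReal ((|a₁| * K ^ (-e₁)) ^ p * (|a₂ - b₂| * K ^ (-f₁)) ^ p) +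
         ENNReal.ofReal ((|b₂| * K ^ (-e₂)) ^ p * (|a₁ - b₁| * K ^ (-f₂)) ^ p)) := by
  rcases eq_or_lt_of_le hK with hK0 | hK0
  · rw [← hK0, Real.zero_rpow hE, div_zero, ENNReal.ofReal_zero]
    exact zero_le
  have hp0 : (0:ℝ) < p := by linarith
  set A := |a₁| * |a₂ - b₂| with hA
  set B := |b₂| * |a₁ - b₁| with hB
  have hA0 : 0 ≤ A := mul_nonneg (abs_nonneg _) (abs_nonneg _)
  have hB0 : 0 ≤ B := mul_nonneg (abs_nonneg _) (abs_nonneg _)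
  have hterm : ∀ c d e f : ℝ, (e + f) * p = E →
      (|c| * K ^ (-e)) ^ p * (|d| * K ^ (-f)) ^ p = (|c| * |d|) ^ p / K ^ E := by
    intro c d e f hef
    have hKp : K ^ (-e*p) * K ^ (-f*p) = K ^ (-E) := by
      rw [← Real.rpow_add hK0]; congr 1; linarith
    calc (|c| * K ^ (-e)) ^ p * (|d| * K ^ (-f)) ^ p
        = |c| ^ p * K ^ (-e*p) * (|d| ^ p * K ^ (-f*p)) := by
          rw [Real.mul_rpow (abs_nonneg _) (Real.rpow_nonneg hK _),
            Real.mul_rpow (abs_nonneg _) (Real.rpow_nonneg hK _),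
            ← Real.rpow_mul hK, ← Real.rpow_mul hK]
      _ = |c| ^ p * |d| ^ p * (K ^ (-e*p) * K ^ (-f*p)) := by ring
      _ = (|c| * |d|) ^ p / K ^ E := by
          rw [hKp, ← Real.mul_rpow (abs_nonneg _) (abs_nonneg _),
            Real.rpow_neg hK, div_eq_mul_inv]
  have habs : |a₁ * a₂ - b₁ * b₂| ≤ A + B := by
    have h : a₁ * a₂ - b₁ * b₂ = a₁ * (a₂ - b₂) + b₂ * (a₁ - b₁) := by ring
    rw [h, hA, hB]
    exact (abs_add_le _ _).trans (by rw [abs_mul, abs_mul])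
  have hreal : |a₁ * a₂ - b₁ * b₂| ^ p / K ^ E ≤
      2 ^ p * ((|a₁| * K ^ (-e₁)) ^ p * (|a₂ - b₂| * K ^ (-f₁)) ^ p +
        (|b₂| * K ^ (-e₂)) ^ p * (|a₁ - b₁| * K ^ (-f₂)) ^ p) := by
    rw [hterm _ _ _ _ hE₁, hterm _ _ _ _ hE₂, ← hA, ← hB]
    have hKE : 0 < K ^ E := Real.rpow_pos_of_pos hK0 E
    calc |a₁ * a₂ - b₁ * b₂| ^ p / K ^ E ≤ (A + B) ^ p / K ^ E :=
          (div_le_div_iff_of_pos_right hKE).mpr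
            (Real.rpow_le_rpow (abs_nonneg _) habs hp0.le)
      _ ≤ 2 ^ p * (A ^ p + B ^ p) / K ^ E :=
          (div_le_div_iff_of_pos_right hKE).mpr (add_rpow_le_two_rpow hp hA0 hB0)
      _ = 2 ^ p * (A ^ p / K ^ E + B ^ p / K ^ E) := by ring
  calc ENNReal.ofReal (|a₁ * a₂ - b₁ * b₂| ^ p / K ^ E)
      ≤ ENNReal.ofReal (2 ^ p * ((|a₁| * K ^ (-e₁)) ^ p * (|a₂ - b₂| * K ^ (-f₁)) ^ p +
          (|b₂| * K ^ (-e₂)) ^ p * (|a₁ - b₁| * K ^ (-f₂)) ^ p)) :=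
        ENNReal.ofReal_le_ofReal hreal
    _ = _ := by
        rw [ENNReal.ofReal_mul (by positivity),
          ENNReal.ofReal_add (by positivity) (by positivity)]

lemma T_pipeline {p pa pb ta sa sb : ℝ} (hp0 : 0 < p) (hpa0 : 0 < pa) (hpb0 : 0 < pb)
    (hconj : Real.HolderConjugate (pa/p) (pb/p)) (hta : ta/pa * pa = ta)
    {Ca : ℝ≥0∞} (hCa : ∀ x ∈ torusBox, (∫⁻ y in torusBox, ENNReal.ofReal (‖x - y‖ ^ (-ta))) ≤ Ca)
    (v w : ℝ × ℝ → ℝ) (hv : Measurable v) (hw : Measurable w) :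
    ∫⁻ z in torusBox ×ˢ torusBox,
        ENNReal.ofReal ((|v z.1| * ‖z.1 - z.2‖ ^ (-(ta/pa))) ^ p *
          (|w z.1 - w z.2| * ‖z.1 - z.2‖ ^ (-((2 + sb*pb)/pb))) ^ p)
      ≤ (Ca * WNormP sa pa v) ^ (p/pa) * (WNormP sb pb w) ^ (p/pb) := by
  have hold := holder_step (μ := volume.restrict (torusBox ×ˢ torusBox)) hp0 hpa0 hpb0 hconj
    (fun z => |v z.1| * ‖z.1 - z.2‖ ^ (-(ta/pa)))
    (fun z => |w z.1 - w z.2| * ‖z.1 - z.2‖ ^ (-((2 + sb*pb)/pb)))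
    (by fun_prop) (by fun_prop) (fun z => by positivity) (fun z => by positivity)
  refine hold.trans ?_
  have hbound1 : (∫⁻ z in torusBox ×ˢ torusBox,
      ENNReal.ofReal ((|v z.1| * ‖z.1 - z.2‖ ^ (-(ta/pa))) ^ pa)) ≤ Ca * WNormP sa pa v := by
    have heq : ∀ z : (ℝ × ℝ) × (ℝ × ℝ),
        ENNReal.ofReal ((|v z.1| * ‖z.1 - z.2‖ ^ (-(ta/pa))) ^ pa)
          = ENNReal.ofReal (|v z.1| ^ pa * ‖z.1 - z.2‖ ^ (-ta)) := by
      intro z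
      congr 1
      rw [Real.mul_rpow (abs_nonneg _) (Real.rpow_nonneg (norm_nonneg _) _),
        ← Real.rpow_mul (norm_nonneg _)]
      congr 2
      rw [neg_mul, hta]
    simp_rw [heq]
    refine (fubini_bound v hv hCa).trans (mul_le_mul_right ?_ Ca)
    exact self_le_add_right _ _
  have hbound2 : (∫⁻ z in torusBox ×ˢ torusBox,
      ENNReal.ofReal ((|w z.1 - w z.2| * ‖z.1 - z.2‖ ^ (-((2 + sb*pb)/pb))) ^ pb))
        ≤ WNormP sb pb w := by
    have heq : ∀ z : (ℝ × ℝ) × (ℝ × ℝ),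
        ENNReal.ofReal ((|w z.1 - w z.2| * ‖z.1 - z.2‖ ^ (-((2 + sb*pb)/pb))) ^ pb)
          = ENNReal.ofReal (|w z.1 - w z.2| ^ pb / ‖z.1 - z.2‖ ^ (2 + sb*pb)) := by
      intro z
      congr 1
      rw [Real.mul_rpow (abs_nonneg _) (Real.rpow_nonneg (norm_nonneg _) _),
        ← Real.rpow_mul (norm_nonneg _),
        show -((2 + sb*pb)/pb) * pb = -(2 + sb*pb) by field_simp,
        Real.rpow_neg (norm_nonneg _), div_eq_mul_inv]
    simp_rw [heq]
    exact self_le_add_left _ _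
  exact mul_le_mul' (ENNReal.rpow_le_rpow hbound1 (by positivity))
    (ENNReal.rpow_le_rpow hbound2 (by positivity))

end Helpers

/-- Fractional Leibniz-type estimate: for `s ∈ (0,1)`, `s₁, s₂ ∈ (s,1)` and
`1/p₁ + 1/p₂ = 1/p`, `‖u₁u₂‖_{W^{s,p}} ≤ c ‖u₁‖_{W^{s₁,p₁}} ‖u₂‖_{W^{s₂,p₂}}`. -/
theorem product_fractional_sobolev_estimate (s s₁ s₂ p p₁ p₂ : ℝ)
    (hs : s ∈ Set.Ioo (0:ℝ) 1) (hs₁ : s₁ ∈ Set.Ioo s 1) (hs₂ : s₂ ∈ Set.Ioo s 1)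
    (hp : 1 ≤ p) (hp₁ : 1 ≤ p₁) (hp₂ : 1 ≤ p₂)
    (hexp : 1 / p₁ + 1 / p₂ = 1 / p) :
    ∃ c : ℝ, 0 < c ∧ ∀ u₁ u₂ : ℝ × ℝ → ℝ, Measurable u₁ → Measurable u₂ →
      (∀ x : ℝ × ℝ, u₁ (x.1 + 2 * π, x.2) = u₁ x ∧ u₁ (x.1, x.2 + 2 * π) = u₁ x) →
      (∀ x : ℝ × ℝ, u₂ (x.1 + 2 * π, x.2) = u₂ x ∧ u₂ (x.1, x.2 + 2 * π) = u₂ x) →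
      WNormP s p (fun x => u₁ x * u₂ x) ^ (1 / p) ≤
        ENNReal.ofReal c * WNormP s₁ p₁ u₁ ^ (1 / p₁) * WNormP s₂ p₂ u₂ ^ (1 / p₂) := by
  obtain ⟨hs0, hs1⟩ := hs
  obtain ⟨hss₁, hs₁1⟩ := hs₁
  obtain ⟨hss₂, hs₂1⟩ := hs₂
  have hp0 : 0 < p := by linarith
  have hp₁0 : 0 < p₁ := by linarith
  have hp₂0 : 0 < p₂ := by linarith
  have hexp' : p * (p₁ + p₂) = p₁ * p₂ := by
    have h := hexp
    field_simp at h
    linarith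
  have hpp₁ : p < p₁ := by
    have h1 : 1/p₁ < 1/p := by
      rw [← hexp]
      have : 0 < 1/p₂ := by positivity
      linarith
    exact lt_of_one_div_lt_one_div hp₁0 h1
  have hpp₂ : p < p₂ := by
    have h1 : 1/p₂ < 1/p := by
      rw [← hexp]
      have : 0 < 1/p₁ := by positivity
      linarith
    exact lt_of_one_div_lt_one_div hp₂0 h1
  have hconjsum : p/p₁ + p/p₂ = 1 := by
    calc p/p₁ + p/p₂ = p * (1/p₁ + 1/p₂) := by ring
      _ = p * (1/p) := by rw [hexp]
      _ = 1 := by field_simp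
  have hconj : Real.HolderConjugate (p₁/p) (p₂/p) :=
    Real.holderConjugate_iff.mpr ⟨(one_lt_div hp0).mpr hpp₁, by
      rw [inv_div, inv_div]; exact hconjsum⟩
  have hconj' : Real.HolderConjugate (p₂/p) (p₁/p) :=
    Real.holderConjugate_iff.mpr ⟨(one_lt_div hp0).mpr hpp₂, by
      rw [inv_div, inv_div]; linarith⟩
  set t₁ := 2 - (s₂ - s) * p₁ with ht₁def
  set t₂ := 2 - (s₁ - s) * p₂ with ht₂def
  have ht₁2 : t₁ < 2 := by nlinarith
  have ht₂2 : t₂ < 2 := by nlinarith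
  obtain ⟨C₁, hC₁top, hC₁⟩ := kernel_bound ht₁2
  obtain ⟨C₂, hC₂top, hC₂⟩ := kernel_bound ht₂2
  set D : ℝ≥0∞ := 1 + ENNReal.ofReal (2 ^ p) * (C₁ ^ (p/p₁) + C₂ ^ (p/p₂)) with hDdef
  have hDtop : D ≠ ∞ := by
    refine ENNReal.add_ne_top.mpr ⟨ENNReal.one_ne_top,
      ENNReal.mul_ne_top ENNReal.ofReal_ne_top (ENNReal.add_ne_top.mpr
        ⟨ENNReal.rpow_ne_top_of_nonneg (by positivity) hC₁top,
         ENNReal.rpow_ne_top_of_nonneg (by positivity) hC₂top⟩)⟩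
  have hDfin : D ^ (1/p) ≠ ∞ := ENNReal.rpow_ne_top_of_nonneg (by positivity) hDtop
  refine ⟨(D ^ (1/p)).toReal + 1, by positivity, ?_⟩
  intro u₁ u₂ hu₁ hu₂ _ _
  have hDle : D ^ (1/p) ≤ ENNReal.ofReal ((D ^ (1/p)).toReal + 1) := by
    conv_lhs => rw [← ENNReal.ofReal_toReal hDfin]
    exact ENNReal.ofReal_le_ofReal (by linarith [ENNReal.toReal_nonneg (a := D ^ (1/p))])
  set W₁ := WNormP s₁ p₁ u₁ with hW₁def
  set W₂ := WNormP s₂ p₂ u₂ with hW₂def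
  -- exponent identities
  have hE₁ : (t₁/p₁ + (2 + s₂*p₂)/p₂) * p = 2 + s*p := by
    rw [ht₁def]
    field_simp
    nlinarith [hexp']
  have hE₂ : (t₂/p₂ + (2 + s₁*p₁)/p₁) * p = 2 + s*p := by
    rw [ht₂def]
    field_simp
    nlinarith [hexp']
  have hE0 : (2 + s*p) ≠ 0 := by positivity
  -- the Lᵖ term
  have hA : (∫⁻ x in torusBox, ENNReal.ofReal (|u₁ x * u₂ x| ^ p))
      ≤ W₁ ^ (p/p₁) * W₂ ^ (p/p₂) := by
    have hold := holder_step (μ := volume.restrict torusBox) hp0 hp₁0 hp₂0 hconj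
      (fun x => |u₁ x|) (fun x => |u₂ x|) (by fun_prop) (by fun_prop)
      (fun x => abs_nonneg _) (fun x => abs_nonneg _)
    have heq : ∀ x : ℝ × ℝ, ENNReal.ofReal (|u₁ x * u₂ x| ^ p)
        = ENNReal.ofReal (|u₁ x| ^ p * |u₂ x| ^ p) := by
      intro x
      rw [abs_mul, Real.mul_rpow (abs_nonneg _) (abs_nonneg _)]
    calc ∫⁻ x in torusBox, ENNReal.ofReal (|u₁ x * u₂ x| ^ p)
        = ∫⁻ x in torusBox, ENNReal.ofReal (|u₁ x| ^ p * |u₂ x| ^ p) := by simp_rw [heq]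
      _ ≤ (∫⁻ x in torusBox, ENNReal.ofReal (|u₁ x| ^ p₁)) ^ (p/p₁) *
          (∫⁻ x in torusBox, ENNReal.ofReal (|u₂ x| ^ p₂)) ^ (p/p₂) := hold
      _ ≤ W₁ ^ (p/p₁) * W₂ ^ (p/p₂) := by
          refine mul_le_mul' (ENNReal.rpow_le_rpow ?_ (by positivity))
            (ENNReal.rpow_le_rpow ?_ (by positivity))
          · exact self_le_add_right _ _
          · exact self_le_add_right _ _
  -- first seminorm term
  have hT₁ := T_pipeline (sa := s₁) (sb := s₂) hp0 hp₁0 hp₂0 hconj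
    (by field_simp : t₁/p₁ * p₁ = t₁) hC₁ u₁ u₂ hu₁ hu₂
  -- second seminorm term, by swapping
  have hT₂ : ∫⁻ z in torusBox ×ˢ torusBox,
      ENNReal.ofReal ((|u₂ z.2| * ‖z.1 - z.2‖ ^ (-(t₂/p₂))) ^ p *
        (|u₁ z.1 - u₁ z.2| * ‖z.1 - z.2‖ ^ (-((2 + s₁*p₁)/p₁))) ^ p)
      ≤ (C₂ * W₂) ^ (p/p₂) * W₁ ^ (p/p₁) := by
    set g : (ℝ × ℝ) × (ℝ × ℝ) → ℝ≥0∞ := fun z =>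
      ENNReal.ofReal ((|u₂ z.1| * ‖z.1 - z.2‖ ^ (-(t₂/p₂))) ^ p *
        (|u₁ z.1 - u₁ z.2| * ‖z.1 - z.2‖ ^ (-((2 + s₁*p₁)/p₁))) ^ p) with hg
    have hsw : ∀ z : (ℝ × ℝ) × (ℝ × ℝ),
        ENNReal.ofReal ((|u₂ z.2| * ‖z.1 - z.2‖ ^ (-(t₂/p₂))) ^ p *
          (|u₁ z.1 - u₁ z.2| * ‖z.1 - z.2‖ ^ (-((2 + s₁*p₁)/p₁))) ^ p)
        = g (z.2, z.1) := by
      intro z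
      rw [hg]
      simp only
      rw [norm_sub_rev z.2 z.1, abs_sub_comm (u₁ z.2) (u₁ z.1)]
    calc ∫⁻ z in torusBox ×ˢ torusBox,
          ENNReal.ofReal ((|u₂ z.2| * ‖z.1 - z.2‖ ^ (-(t₂/p₂))) ^ p *
            (|u₁ z.1 - u₁ z.2| * ‖z.1 - z.2‖ ^ (-((2 + s₁*p₁)/p₁))) ^ p)
        = ∫⁻ z in torusBox ×ˢ torusBox, g (z.2, z.1) := lintegral_congr hsw
      _ = ∫⁻ z in torusBox ×ˢ torusBox, g z := lintegral_swap_box g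
      _ ≤ (C₂ * W₂) ^ (p/p₂) * W₁ ^ (p/p₁) := by
          rw [hg]
          exact T_pipeline (sa := s₂) (sb := s₁) hp0 hp₂0 hp₁0 hconj'
            (by field_simp : t₂/p₂ * p₂ = t₂) hC₂ u₂ u₁ hu₂ hu₁
  -- the seminorm of the product
  have hB : (∫⁻ z in torusBox ×ˢ torusBox,
      ENNReal.ofReal (|u₁ z.1 * u₂ z.1 - u₁ z.2 * u₂ z.2| ^ p / ‖z.1 - z.2‖ ^ (2 + s*p)))
      ≤ ENNReal.ofReal (2 ^ p) *
        ((C₁ * W₁) ^ (p/p₁) * W₂ ^ (p/p₂) + (C₂ * W₂) ^ (p/p₂) * W₁ ^ (p/p₁)) := by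
    calc ∫⁻ z in torusBox ×ˢ torusBox,
          ENNReal.ofReal (|u₁ z.1 * u₂ z.1 - u₁ z.2 * u₂ z.2| ^ p / ‖z.1 - z.2‖ ^ (2 + s*p))
        ≤ ∫⁻ z in torusBox ×ˢ torusBox, ENNReal.ofReal (2 ^ p) *
            (ENNReal.ofReal ((|u₁ z.1| * ‖z.1 - z.2‖ ^ (-(t₁/p₁))) ^ p *
              (|u₂ z.1 - u₂ z.2| * ‖z.1 - z.2‖ ^ (-((2 + s₂*p₂)/p₂))) ^ p) +
             ENNReal.ofReal ((|u₂ z.2| * ‖z.1 - z.2‖ ^ (-(t₂/p₂))) ^ p *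
              (|u₁ z.1 - u₁ z.2| * ‖z.1 - z.2‖ ^ (-((2 + s₁*p₁)/p₁))) ^ p)) := by
          refine lintegral_mono fun z => ?_
          exact pointwise_key hp hE0 hE₁ hE₂ (u₁ z.1) (u₁ z.2) (u₂ z.1) (u₂ z.2)
            ‖z.1 - z.2‖ (norm_nonneg _)
      _ = ENNReal.ofReal (2 ^ p) *
            ((∫⁻ z in torusBox ×ˢ torusBox,
              ENNReal.ofReal ((|u₁ z.1| * ‖z.1 - z.2‖ ^ (-(t₁/p₁))) ^ p *
                (|u₂ z.1 - u₂ z.2| * ‖z.1 - z.2‖ ^ (-((2 + s₂*p₂)/p₂))) ^ p)) +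
             (∫⁻ z in torusBox ×ˢ torusBox,
              ENNReal.ofReal ((|u₂ z.2| * ‖z.1 - z.2‖ ^ (-(t₂/p₂))) ^ p *
                (|u₁ z.1 - u₁ z.2| * ‖z.1 - z.2‖ ^ (-((2 + s₁*p₁)/p₁))) ^ p))) := by
          rw [lintegral_const_mul' _ _ ENNReal.ofReal_ne_top,
            lintegral_add_left (by fun_prop)]
      _ ≤ ENNReal.ofReal (2 ^ p) *
            ((C₁ * W₁) ^ (p/p₁) * W₂ ^ (p/p₂) + (C₂ * W₂) ^ (p/p₂) * W₁ ^ (p/p₁)) :=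
          mul_le_mul_right (add_le_add hT₁ hT₂) _
  -- put the two pieces together
  have hW : WNormP s p (fun x => u₁ x * u₂ x) ≤ D * (W₁ ^ (p/p₁) * W₂ ^ (p/p₂)) := by
    show (∫⁻ x in torusBox, ENNReal.ofReal (|u₁ x * u₂ x| ^ p)) +
          (∫⁻ z in torusBox ×ˢ torusBox,
            ENNReal.ofReal (|u₁ z.1 * u₂ z.1 - u₁ z.2 * u₂ z.2| ^ p / ‖z.1 - z.2‖ ^ (2 + s*p)))
        ≤ D * (W₁ ^ (p/p₁) * W₂ ^ (p/p₂))
    calc (∫⁻ x in torusBox, ENNReal.ofReal (|u₁ x * u₂ x| ^ p)) +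
          ∫⁻ z in torusBox ×ˢ torusBox,
            ENNReal.ofReal (|u₁ z.1 * u₂ z.1 - u₁ z.2 * u₂ z.2| ^ p / ‖z.1 - z.2‖ ^ (2 + s*p))
        ≤ W₁ ^ (p/p₁) * W₂ ^ (p/p₂) + ENNReal.ofReal (2 ^ p) *
            ((C₁ * W₁) ^ (p/p₁) * W₂ ^ (p/p₂) + (C₂ * W₂) ^ (p/p₂) * W₁ ^ (p/p₁)) :=
          add_le_add hA hB
      _ = D * (W₁ ^ (p/p₁) * W₂ ^ (p/p₂)) := by
          rw [hDdef, ENNReal.mul_rpow_of_nonneg _ _ (by positivity),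
            ENNReal.mul_rpow_of_nonneg _ _ (by positivity)]
          ring
  calc WNormP s p (fun x => u₁ x * u₂ x) ^ (1/p)
      ≤ (D * (W₁ ^ (p/p₁) * W₂ ^ (p/p₂))) ^ (1/p) :=
        ENNReal.rpow_le_rpow hW (by positivity)
    _ = D ^ (1/p) * (W₁ ^ (1/p₁) * W₂ ^ (1/p₂)) := by
        rw [ENNReal.mul_rpow_of_nonneg _ _ (by positivity),
          ENNReal.mul_rpow_of_nonneg _ _ (by positivity),
          ← ENNReal.rpow_mul, ← ENNReal.rpow_mul,
          show (p/p₁) * (1/p) = 1/p₁ by field_simp,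
          show (p/p₂) * (1/p) = 1/p₂ by field_simp]
    _ ≤ ENNReal.ofReal ((D ^ (1/p)).toReal + 1) * (W₁ ^ (1/p₁) * W₂ ^ (1/p₂)) :=
        mul_le_mul_left hDle _
    _ = ENNReal.ofReal ((D ^ (1/p)).toReal + 1) * W₁ ^ (1/p₁) * W₂ ^ (1/p₂) := by
        rw [mul_assoc]
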